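/- (Symmetry) For all integers n ≥ 1, c ≥ 1, and 0 ≤ k ≤ (c−1)·n + c·C(n,2), the colored Mahonian numbers satisfy i_c(n,k) = i_c(n, (c−1)·n + c·C(n,2) − k). -/

import Mathlib

open Finset

/-- The inversion number of a permutation of `Fin n`:
`inv(π) = #{(i,j) : i < j, π(i) > π(j)}`. -/
def invNum {n : ℕ} (π : Equiv.Perm (Fin n)) : ℕ :=
  ((Finset.univ : Finset (Fin n × Fin n)).filter
    (fun p => p.1 < p.2 ∧ π p.2 < π p.1)).card

/-- The colored inversion statistic on a colored permutation `σ = (π, f)`: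
`inv_c(σ) = inv(π) + ∑ f(j) + c·#{(i,j) : i < j, π(i) < π(j), f(j) ≠ 0}`. -/
def invC (c : ℕ) {n : ℕ} (σ : Equiv.Perm (Fin n) × (Fin n → Fin c)) : ℕ :=
  invNum σ.1 + (∑ j, (σ.2 j : ℕ)) +
    c * ((Finset.univ : Finset (Fin n × Fin n)).filter
      (fun p => p.1 < p.2 ∧ σ.1 p.1 < σ.1 p.2 ∧ (σ.2 p.2 : ℕ) ≠ 0)).card

/-- The colored Mahonian number `i_c(n,k)`: the number of colored permutations
of size `n` with exactly `k` colored inversions. -/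
noncomputable def mahonianC (c n k : ℕ) : ℕ :=
  Nat.card {σ : Equiv.Perm (Fin n) × (Fin n → Fin c) // invC c σ = k}

namespace MahAux

/-- Insert value `v` at the last position of permutation `e`. -/
noncomputable def ins {n : ℕ} (v : Fin (n+1)) (e : Equiv.Perm (Fin n)) :
    Equiv.Perm (Fin (n+1)) :=
  Equiv.ofBijective (Fin.lastCases v (fun j => v.succAbove (e j)))
    (Finite.injective_iff_bijective.mp (by
      intro x y
      induction x using Fin.lastCases with
      | last =>
        induction y using Fin.lastCases with
        | last => simp
        | cast y =>
          simp only [Fin.lastCases_last, Fin.lastCases_castSucc]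
          exact fun h => absurd h.symm (Fin.succAbove_ne v (e y))
      | cast x =>
        induction y using Fin.lastCases with
        | last =>
          simp only [Fin.lastCases_last, Fin.lastCases_castSucc]
          exact fun h => absurd h (Fin.succAbove_ne v (e x))
        | cast y =>
          simp only [Fin.lastCases_castSucc]
          intro h
          have := e.injective (v.succAbove_right_injective h)
          simp [this]))

@[simp] lemma ins_castSucc {n : ℕ} (v : Fin (n+1)) (e : Equiv.Perm (Fin n)) (i : Fin n) :
    ins v e (Fin.castSucc i) = v.succAbove (e i) := by
  simp [ins, Equiv.ofBijective]

@[simp] lemma ins_last {n : ℕ} (v : Fin (n+1)) (e : Equiv.Perm (Fin n)) :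
    ins v e (Fin.last n) = v := by
  simp [ins, Equiv.ofBijective]

lemma sum_ite_val_lt (n m : ℕ) (h : m ≤ n) :
    (∑ y : Fin n, if (y : ℕ) < m then 1 else 0) = m := by
  induction n with
  | zero => interval_cases m; simp
  | succ n ih =>
    rw [Fin.sum_univ_castSucc]
    rcases Nat.lt_or_ge m (n+1) with hm | hm
    · have := ih (by omega)
      simp only [Fin.coe_castSucc, Fin.val_last, this]
      rw [if_neg (by omega)]
      omega
    · have hm' : m = n + 1 := by omega
      subst hm'
      simp only [Fin.coe_castSucc, Fin.val_last]
      rw [Finset.sum_congr rfl (fun (y : Fin n) _ => if_pos (by omega : (y:ℕ) < n+1)),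
        Finset.sum_const, if_pos (by omega : n < n+1)]
      simp

lemma sum_ite_val_ge (n m : ℕ) (h : m ≤ n) :
    (∑ y : Fin n, if m ≤ (y : ℕ) then 1 else 0) = n - m := by
  have h1 : (∑ y : Fin n, if m ≤ (y : ℕ) then 1 else 0)
      + (∑ y : Fin n, if (y : ℕ) < m then 1 else 0) = n := by
    rw [← Finset.sum_add_distrib]
    have step : ∀ y : Fin n,
        ((if m ≤ (y:ℕ) then 1 else 0) + if (y:ℕ) < m then 1 else 0) = 1 := by
      intro y; split_ifs <;> omega
    rw [Finset.sum_congr rfl fun y _ => step y, Finset.sum_const, smul_eq_mul, mul_one,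
      Finset.card_univ, Fintype.card_fin]
  have h2 := sum_ite_val_lt n m h
  omega


lemma invNum_ins {n : ℕ} (v : Fin (n+1)) (e : Equiv.Perm (Fin n)) :
    invNum (ins v e) = invNum e + (n - (v:ℕ)) := by
  unfold invNum
  rw [Finset.card_filter, Finset.card_filter, Fintype.sum_prod_type, Fintype.sum_prod_type]
  simp only [Fin.sum_univ_castSucc, ins_castSucc, ins_last,
    Fin.castSucc_lt_castSucc_iff, Fin.succAbove_lt_succAbove_iff,
    Fin.castSucc_lt_last, Fin.lt_succAbove_iff_le_castSucc, true_and, and_true,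
    lt_self_iff_false, false_and, if_false, and_false, add_zero]
  have h0 : ∀ x : Fin n, ¬ (Fin.last n < Fin.castSucc x) := fun x => Fin.not_lt.mpr (Fin.le_last _)
  simp only [h0, false_and, if_false, Finset.sum_const_zero, add_zero]
  rw [Finset.sum_add_distrib]
  congr 1
  rw [Equiv.sum_comp e (fun y => if v ≤ Fin.castSucc y then 1 else 0)]
  have hiff : ∀ y : Fin n, (v ≤ Fin.castSucc y) ↔ ((v:ℕ) ≤ (y:ℕ)) := fun y => by
    rw [Fin.le_def, Fin.coe_castSucc]
  simp only [hiff]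
  exact sum_ite_val_ge n v (Fin.is_le v)

def tVal {n c : ℕ} (v : Fin (n+1)) (f : Fin c) : ℕ :=
  (n - (v:ℕ)) + (f:ℕ) + c * (if (f:ℕ) = 0 then 0 else (v:ℕ))

lemma coNum_ins {n c : ℕ} (v : Fin (n+1)) (e : Equiv.Perm (Fin n))
    (g : Fin n → Fin c) (f : Fin c) :
    ((Finset.univ : Finset (Fin (n+1) × Fin (n+1))).filter
      (fun p => p.1 < p.2 ∧ ins v e p.1 < ins v e p.2 ∧
        ((Fin.snoc g f : Fin (n+1) → Fin c) p.2 : ℕ) ≠ 0)).card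
    = ((Finset.univ : Finset (Fin n × Fin n)).filter
      (fun p => p.1 < p.2 ∧ e p.1 < e p.2 ∧ (g p.2 : ℕ) ≠ 0)).card
      + (if (f:ℕ) = 0 then 0 else (v:ℕ)) := by
  rw [Finset.card_filter, Finset.card_filter, Fintype.sum_prod_type, Fintype.sum_prod_type]
  simp only [Fin.sum_univ_castSucc, ins_castSucc, ins_last, Fin.snoc_castSucc, Fin.snoc_last,
    Fin.castSucc_lt_castSucc_iff, Fin.succAbove_lt_succAbove_iff,
    Fin.castSucc_lt_last, Fin.succAbove_lt_iff_castSucc_lt, true_and, and_true,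
    lt_self_iff_false, false_and, if_false, and_false, add_zero]
  have h0 : ∀ x : Fin n, ¬ (Fin.last n < Fin.castSucc x) := fun x => Fin.not_lt.mpr (Fin.le_last _)
  simp only [h0, false_and, if_false, Finset.sum_const_zero, add_zero]
  rw [Finset.sum_add_distrib]
  congr 1
  rcases eq_or_ne (f:ℕ) 0 with hf | hf
  · simp [hf]
  · simp only [hf, ne_eq, not_false_iff, and_true, if_neg hf]
    rw [Equiv.sum_comp e (fun y => if Fin.castSucc y < v then 1 else 0)]
    have hiff : ∀ y : Fin n, (Fin.castSucc y < v) ↔ ((y:ℕ) < (v:ℕ)) := fun y => by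
      rw [Fin.lt_def, Fin.coe_castSucc]
    simp only [hiff]
    exact sum_ite_val_lt n v (Fin.is_le v)

lemma sum_snoc {n c : ℕ} (g : Fin n → Fin c) (f : Fin c) :
    (∑ j, ((Fin.snoc g f : Fin (n+1) → Fin c) j : ℕ)) = (∑ j, (g j : ℕ)) + (f:ℕ) := by
  rw [Fin.sum_univ_castSucc]
  simp

lemma invC_ins {n c : ℕ} (v : Fin (n+1)) (e : Equiv.Perm (Fin n))
    (g : Fin n → Fin c) (f : Fin c) :
    invC c (ins v e, (Fin.snoc g f : Fin (n+1) → Fin c)) = invC c (e, g) + tVal v f := by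
  unfold invC tVal
  simp only [invNum_ins, coNum_ins, sum_snoc, Nat.mul_add]
  ring

noncomputable def insEquiv (n : ℕ) :
    (Equiv.Perm (Fin n) × Fin (n+1)) ≃ Equiv.Perm (Fin (n+1)) :=
  Equiv.ofBijective (fun p => ins p.2 p.1) (by
    rw [Fintype.bijective_iff_injective_and_card]
    constructor
    · rintro ⟨e, v⟩ ⟨e', v'⟩ h
      simp only at h
      have hv : v = v' := by
        have := congrArg (fun π => π (Fin.last n)) h
        simpa using this
      subst hv
      have he : e = e' := by
        ext i
        have := congrArg (fun π => π (Fin.castSucc i)) h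
        simp only [ins_castSucc] at this
        exact congrArg Fin.val (v.succAbove_right_injective this)
      simp [he]
    · simp [Fintype.card_perm, Nat.factorial_succ, mul_comm])

@[simp] lemma insEquiv_apply {n : ℕ} (e : Equiv.Perm (Fin n)) (v : Fin (n+1)) :
    insEquiv n (e, v) = ins v e := rfl

lemma tVal_lt {n c : ℕ} (v : Fin (n+1)) (f : Fin c) : tVal v f < c * (n+1) := by
  have hc : 0 < c := f.pos
  have hv : (v:ℕ) ≤ n := Fin.is_le v
  have hf : (f:ℕ) < c := f.is_lt
  unfold tVal
  rcases eq_or_ne (f:ℕ) 0 with h | h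
  · rw [h, if_pos rfl]
    have : n + 1 ≤ c * (n+1) := Nat.le_mul_of_pos_left _ hc
    omega
  · rw [if_neg h]
    have h1 : (v:ℕ) ≤ c * (v:ℕ) := Nat.le_mul_of_pos_left _ hc
    have h2 : c * (v:ℕ) + c * (n - (v:ℕ)) = c * n := by
      rw [← Nat.mul_add]
      congr 1
      omega
    have h3 : n - (v:ℕ) ≤ c * (n - (v:ℕ)) := Nat.le_mul_of_pos_left _ hc
    have h4 : c * n + c = c * (n + 1) := by ring
    omega

lemma tVal_inj_aux {n c : ℕ} (v v' : Fin (n+1)) (f f' : Fin c)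
    (hlt : (v:ℕ) < (v':ℕ)) (hf : (f:ℕ) ≠ 0) (hf' : (f':ℕ) ≠ 0) :
    tVal v f ≠ tVal v' f' := by
  unfold tVal
  rw [if_neg hf, if_neg hf']
  intro h
  have hv : (v:ℕ) ≤ n := Fin.is_le v
  have hv' : (v':ℕ) ≤ n := Fin.is_le v'
  have hfb : (f:ℕ) < c := f.is_lt
  have hfb' : (f':ℕ) < c := f'.is_lt
  set d := (v':ℕ) - (v:ℕ) with hd
  have hd1 : 1 ≤ d := by omega
  have hsplit : c * (v':ℕ) = c * (v:ℕ) + c * d := by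
    rw [← Nat.mul_add]
    congr 1
    omega
  rcases Nat.lt_or_ge d 2 with hd2 | hd2
  · have : d = 1 := by omega
    rw [this, Nat.mul_one] at hsplit
    omega
  · have hc2 : 2 ≤ c := by omega
    have := Nat.add_le_mul hc2 hd2
    omega

noncomputable def tEquiv (n c : ℕ) : (Fin (n+1) × Fin c) ≃ Fin (c * (n+1)) :=
  Equiv.ofBijective (fun p => ⟨tVal p.1 p.2, tVal_lt p.1 p.2⟩) (by
    rw [Fintype.bijective_iff_injective_and_card]
    constructor
    · rintro ⟨v, f⟩ ⟨v', f'⟩ h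
      simp only [Fin.mk.injEq] at h
      have hv : (v:ℕ) ≤ n := Fin.is_le v
      have hv' : (v':ℕ) ≤ n := Fin.is_le v'
      rcases eq_or_ne (f:ℕ) 0 with hf | hf <;> rcases eq_or_ne (f':ℕ) 0 with hf' | hf'
      · unfold tVal at h
        rw [hf, hf', if_pos rfl, if_pos rfl] at h
        have h1 : (v:ℕ) = (v':ℕ) := by omega
        have : f = f' := Fin.val_injective (hf.trans hf'.symm)
        simp [Fin.val_injective h1, this]
      · exfalso
        unfold tVal at h
        rw [hf, if_pos rfl, if_neg hf'] at h
        have h1 : (v':ℕ) ≤ c * (v':ℕ) := Nat.le_mul_of_pos_left _ f.pos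
        omega
      · exfalso
        unfold tVal at h
        rw [hf', if_pos rfl, if_neg hf] at h
        have h1 : (v:ℕ) ≤ c * (v:ℕ) := Nat.le_mul_of_pos_left _ f.pos
        omega
      · rcases lt_trichotomy (v:ℕ) (v':ℕ) with hlt | heq | hgt
        · exact absurd h (tVal_inj_aux v v' f f' hlt hf hf')
        · have hveq : v = v' := Fin.val_injective heq
          subst hveq
          unfold tVal at h
          rw [if_neg hf, if_neg hf'] at h
          have : f = f' := Fin.val_injective (by omega)
          simp [this]
        · exact absurd h.symm (tVal_inj_aux v' v f' f hgt hf' hf)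
    · simp [mul_comm])

@[simp] lemma tEquiv_val {n c : ℕ} (v : Fin (n+1)) (f : Fin c) :
    ((tEquiv n c (v, f) : Fin (c * (n+1))) : ℕ) = tVal v f := rfl

theorem code_exists (c : ℕ) : ∀ n : ℕ,
    ∃ E : (Equiv.Perm (Fin n) × (Fin n → Fin c)) ≃ (∀ j : Fin n, Fin (c * ((j:ℕ)+1))),
      ∀ σ, invC c σ = ∑ j, ((E σ) j : ℕ) := by
  intro n
  induction n with
  | zero =>
    haveI : Unique (Equiv.Perm (Fin 0)) := ⟨⟨1⟩, fun e => Equiv.ext fun x => x.elim0⟩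
    haveI : Unique (Fin 0 → Fin c) := ⟨⟨fun x => x.elim0⟩, fun g => funext fun x => x.elim0⟩
    haveI : Unique (∀ j : Fin 0, Fin (c * ((j:ℕ)+1))) :=
      ⟨⟨fun x => x.elim0⟩, fun g => funext fun x => x.elim0⟩
    haveI : Unique (Equiv.Perm (Fin 0) × (Fin 0 → Fin c)) := ⟨⟨(default, default)⟩,
      fun p => Prod.ext (Subsingleton.elim _ _) (Subsingleton.elim _ _)⟩
    refine ⟨Equiv.ofUnique _ _, fun σ => ?_⟩
    simp [invC, invNum]
  | succ n ih =>
    obtain ⟨E, hE⟩ := ih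
    refine ⟨(((insEquiv n).symm.prodCongr
        (((Fin.snocEquiv (fun _ : Fin (n+1) => Fin c)).symm).trans
          (Equiv.prodComm _ _))).trans
      ((Equiv.prodProdProdComm _ _ _ _).trans
      ((E.prodCongr (tEquiv n c)).trans
      ((Equiv.prodComm _ _).trans
      (Fin.snocEquiv (fun j : Fin (n+1) => Fin (c * ((j:ℕ)+1)))))))), fun σ => ?_⟩
    obtain ⟨π, h⟩ := σ
    obtain ⟨⟨e, v⟩, rfl⟩ := (insEquiv n).surjective π
    obtain ⟨g, f, rfl⟩ : ∃ g fz, h = Fin.snoc g fz := ⟨Fin.init h, h (Fin.last n), (Fin.snoc_init_self h).symm⟩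
    rw [insEquiv_apply, invC_ins, hE (e, g)]
    have hs : (insEquiv n).symm (ins v e) = (e, v) := by
      rw [← insEquiv_apply]; exact Equiv.symm_apply_apply _ _
    simp only [Equiv.trans_apply, Equiv.prodCongr_apply, Equiv.prodComm_apply, Prod.map,
      Equiv.symm_apply_apply, Fin.snocEquiv_symm_apply, Fin.snoc_last, Fin.init_snoc,
      Prod.swap_prod_mk, Equiv.prodProdProdComm_apply, hs]
    simp only [Fin.snocEquiv]
    rw [Fin.sum_univ_castSucc]
    simp [tEquiv_val]

lemma sumM (c n : ℕ) (hc : 1 ≤ c) :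
    ∑ j : Fin n, (c * ((j:ℕ)+1) - 1) = (c - 1) * n + c * n.choose 2 := by
  have hS2 : (∑ i ∈ Finset.range n, i) * 2 = n * (n - 1) := Finset.sum_range_id_mul_two n
  have hch : n.choose 2 = n * (n - 1) / 2 := Nat.choose_two_right n
  have heven : n * (n - 1) / 2 * 2 = n * (n - 1) := by omega
  have hch2 : n.choose 2 * 2 = (∑ i ∈ Finset.range n, i) * 2 := by rw [hch]; omega
  have hchS : n.choose 2 = ∑ i ∈ Finset.range n, i := by omega
  have h1 : (∑ j : Fin n, (c * ((j:ℕ)+1) - 1)) + n = ∑ j : Fin n, c * ((j:ℕ)+1) := by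
    have : ∑ j : Fin n, c * ((j:ℕ)+1)
        = ∑ j : Fin n, ((c * ((j:ℕ)+1) - 1) + 1) := by
      refine Finset.sum_congr rfl fun j _ => ?_
      have : 0 < c * ((j:ℕ)+1) := Nat.mul_pos hc (Nat.succ_pos _)
      omega
    rw [this, Finset.sum_add_distrib]
    simp
  have h2 : ∑ j : Fin n, c * ((j:ℕ)+1) = c * ((∑ j : Fin n, (j:ℕ)) + n) := by
    calc ∑ j : Fin n, c * ((j:ℕ)+1) = ∑ j : Fin n, (c*(j:ℕ) + c) :=
          Finset.sum_congr rfl fun j _ => by ring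
      _ = (∑ j : Fin n, c*(j:ℕ)) + n * c := by
          rw [Finset.sum_add_distrib, Finset.sum_const, Finset.card_univ, Fintype.card_fin,
            smul_eq_mul]
      _ = c * ((∑ j : Fin n, (j:ℕ)) + n) := by rw [← Finset.mul_sum]; ring
  have h3 : (∑ j : Fin n, (j:ℕ)) = ∑ i ∈ Finset.range n, i :=
    Fin.sum_univ_eq_sum_range (fun i => i) n
  set S := ∑ i ∈ Finset.range n, i
  rw [h3] at h2
  have h4 : c * (S + n) = c * S + c * n := by ring
  have h5 : (c-1) * n + n = c * n := by
    have : c - 1 + 1 = c := by omega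
    calc (c-1)*n + n = ((c-1)+1)*n := by ring
    _ = c * n := by rw [this]
  have h6 : c * n.choose 2 = c * S := by rw [hchS]
  omega

end MahAux

/-- Symmetry of the colored Mahonian numbers. -/
theorem mahonianC_symm (c n k : ℕ) (hc : 1 ≤ c) (hn : 1 ≤ n)
    (hk : k ≤ (c - 1) * n + c * n.choose 2) :
    mahonianC c n k = mahonianC c n ((c - 1) * n + c * n.choose 2 - k) := by
  classical
  obtain ⟨E, hE⟩ := MahAux.code_exists c n
  set M := (c - 1) * n + c * n.choose 2 with hMdef
  have hM : ∑ j : Fin n, (c * ((j:ℕ)+1) - 1) = M := MahAux.sumM c n hc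
  have hsum : ∀ x : ∀ j : Fin n, Fin (c * ((j:ℕ)+1)),
      (∑ j, ((x j).rev : ℕ)) + (∑ j, ((x j) : ℕ)) = M := by
    intro x
    rw [← Finset.sum_add_distrib, ← hM]
    refine Finset.sum_congr rfl fun j _ => ?_
    have := (x j).is_lt
    rw [Fin.val_rev]
    omega
  have rev1 : ∀ (m : ℕ) (x : {x : ∀ j : Fin n, Fin (c * ((j:ℕ)+1)) // (∑ j, ((x j) : ℕ)) = m}),
      True := fun _ _ => trivial
  unfold mahonianC
  refine Nat.card_congr ?_
  have mid : {x : ∀ j : Fin n, Fin (c * ((j:ℕ)+1)) // (∑ j, ((x j) : ℕ)) = k}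
      ≃ {x : ∀ j : Fin n, Fin (c * ((j:ℕ)+1)) // (∑ j, ((x j) : ℕ)) = M - k} := by
    refine ⟨fun x => ⟨fun j => (x.1 j).rev, ?_⟩, fun y => ⟨fun j => (y.1 j).rev, ?_⟩, ?_, ?_⟩
    · show (∑ j : Fin n, ((x.1 j).rev : ℕ)) = M - k
      have h1 := hsum x.1
      have h2 := x.2
      omega
    · show (∑ j : Fin n, (((y.1 j).rev) : ℕ)) = k
      have h1 := hsum y.1
      have h2 := y.2
      omega
    · intro x
      apply Subtype.ext
      funext j
      simp [Fin.rev_rev]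
    · intro y
      apply Subtype.ext
      funext j
      simp [Fin.rev_rev]
  exact (Equiv.subtypeEquiv E fun σ => by rw [hE σ]).trans
    (mid.trans (Equiv.subtypeEquiv E fun σ => by rw [hE σ]).symm)
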